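/- Let E be a finite-dimensional Euclidean space, p a polynomial on E, and R the linear span of all translates p_a(x) = p(x+a), a ∈ E. If (p_i)_{i∈I} is an orthonormal basis of R for the Fischer inner product and p̆_i = ∂(p_i)p, then for all x, y ∈ E: p(x+y) = Σ_{i∈I} p_i(x) p̆_i(y). -/

import Mathlib

set_option autoImplicit false

open MvPolynomial Classical

/-- The monomial differential operator `∂^d = ∏_i ∂_i^{d_i}` on polynomials on `ℝⁿ`. -/
noncomputable def monOp {n : ℕ} (d : Fin n →₀ ℕ) (q : MvPolynomial (Fin n) ℝ) :
    MvPolynomial (Fin n) ℝ :=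
  (Finset.univ : Finset (Fin n)).toList.foldr (fun i r => (⇑(pderiv i))^[d i] r) q

/-- The constant-coefficient differential operator `∂(p)` associated to a polynomial `p`. -/
noncomputable def diffOp {n : ℕ} (p q : MvPolynomial (Fin n) ℝ) : MvPolynomial (Fin n) ℝ :=
  (AddMonoidAlgebra.coeff p).sum fun d c => c • monOp d q

/-- The Fischer inner product `(p,q)_F = (∂(p)q)(0)`. -/
noncomputable def fischer {n : ℕ} (p q : MvPolynomial (Fin n) ℝ) : ℝ :=
  constantCoeff (diffOp p q)

/-- The translate `p_a(x) = p(x + a)` of a polynomial. -/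
noncomputable def polyTranslate {n : ℕ} (p : MvPolynomial (Fin n) ℝ) (a : Fin n → ℝ) :
    MvPolynomial (Fin n) ℝ :=
  aeval (fun i => X i + C (a i)) p

/-- The linear span `R` of all translates of `p`. -/
noncomputable def translateSpan {n : ℕ} (p : MvPolynomial (Fin n) ℝ) :
    Submodule ℝ (MvPolynomial (Fin n) ℝ) :=
  Submodule.span ℝ (Set.range (polyTranslate p))

section aux

variable {n : ℕ}

lemma pderiv_polyTranslate (i : Fin n) (y : Fin n → ℝ) (p : MvPolynomial (Fin n) ℝ) :
    pderiv i (polyTranslate p y) = polyTranslate (pderiv i p) y := by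
  induction p using MvPolynomial.induction_on with
  | C a => simp [polyTranslate, pderiv_C]
  | add p q hp hq => simp [polyTranslate, map_add] at hp hq ⊢; rw [hp, hq]
  | mul_X p j hp =>
      simp only [polyTranslate, map_mul, aeval_X, pderiv_mul, pderiv_X] at hp ⊢
      rw [hp]
      by_cases h : i = j
      · subst h; simp [Pi.single_eq_same]
      · simp [Pi.single_eq_of_ne (Ne.symm h), Pi.single_eq_of_ne h]

lemma iter_pderiv_polyTranslate (i : Fin n) (k : ℕ) (y : Fin n → ℝ)
    (p : MvPolynomial (Fin n) ℝ) :
    (⇑(pderiv i))^[k] (polyTranslate p y) = polyTranslate ((⇑(pderiv i))^[k] p) y := by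
  induction k generalizing p with
  | zero => simp
  | succ k ih => simp [Function.iterate_succ_apply, pderiv_polyTranslate, ih]

lemma iter_pderiv_add (i : Fin n) (k : ℕ) (q r : MvPolynomial (Fin n) ℝ) :
    (⇑(pderiv i))^[k] (q + r) = (⇑(pderiv i))^[k] q + (⇑(pderiv i))^[k] r := by
  induction k generalizing q r with
  | zero => simp
  | succ k ih => simp [Function.iterate_succ_apply, map_add, ih]

lemma iter_pderiv_smul (i : Fin n) (k : ℕ) (c : ℝ) (q : MvPolynomial (Fin n) ℝ) :
    (⇑(pderiv i))^[k] (c • q) = c • (⇑(pderiv i))^[k] q := by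
  induction k generalizing q with
  | zero => simp
  | succ k ih => simp [Function.iterate_succ_apply, map_smul, ih]

lemma foldr_add (l : List (Fin n)) (d : Fin n →₀ ℕ) (q r : MvPolynomial (Fin n) ℝ) :
    l.foldr (fun i s => (⇑(pderiv i))^[d i] s) (q + r) =
      l.foldr (fun i s => (⇑(pderiv i))^[d i] s) q +
        l.foldr (fun i s => (⇑(pderiv i))^[d i] s) r := by
  induction l generalizing q r with
  | nil => rfl
  | cons a l ih => simp [List.foldr_cons, ih, iter_pderiv_add]

lemma foldr_smul (l : List (Fin n)) (d : Fin n →₀ ℕ) (c : ℝ) (q : MvPolynomial (Fin n) ℝ) :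
    l.foldr (fun i s => (⇑(pderiv i))^[d i] s) (c • q) =
      c • l.foldr (fun i s => (⇑(pderiv i))^[d i] s) q := by
  induction l generalizing q with
  | nil => rfl
  | cons a l ih => simp [List.foldr_cons, ih, iter_pderiv_smul]

lemma foldr_translate (l : List (Fin n)) (d : Fin n →₀ ℕ) (y : Fin n → ℝ)
    (q : MvPolynomial (Fin n) ℝ) :
    l.foldr (fun i s => (⇑(pderiv i))^[d i] s) (polyTranslate q y) =
      polyTranslate (l.foldr (fun i s => (⇑(pderiv i))^[d i] s) q) y := by
  induction l generalizing q with
  | nil => rfl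
  | cons a l ih => simp [List.foldr_cons, ih, iter_pderiv_polyTranslate]

lemma monOp_add (d : Fin n →₀ ℕ) (q r : MvPolynomial (Fin n) ℝ) :
    monOp d (q + r) = monOp d q + monOp d r := foldr_add _ _ _ _

lemma monOp_smul (d : Fin n →₀ ℕ) (c : ℝ) (q : MvPolynomial (Fin n) ℝ) :
    monOp d (c • q) = c • monOp d q := foldr_smul _ _ _ _

lemma monOp_translate (d : Fin n →₀ ℕ) (y : Fin n → ℝ) (q : MvPolynomial (Fin n) ℝ) :
    monOp d (polyTranslate q y) = polyTranslate (monOp d q) y := foldr_translate _ _ _ _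

lemma diffOp_add_right (p q r : MvPolynomial (Fin n) ℝ) :
    diffOp p (q + r) = diffOp p q + diffOp p r := by
  unfold diffOp
  rw [← Finsupp.sum_add]
  exact Finsupp.sum_congr fun d _ => by rw [monOp_add, smul_add]

lemma diffOp_smul_right (p : MvPolynomial (Fin n) ℝ) (c : ℝ) (q : MvPolynomial (Fin n) ℝ) :
    diffOp p (c • q) = c • diffOp p q := by
  unfold diffOp
  rw [Finsupp.smul_sum]
  exact Finsupp.sum_congr fun d _ => by rw [monOp_smul, smul_comm]

lemma diffOp_translate (p q : MvPolynomial (Fin n) ℝ) (y : Fin n → ℝ) :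
    diffOp p (polyTranslate q y) = polyTranslate (diffOp p q) y := by
  unfold diffOp
  rw [show polyTranslate ((AddMonoidAlgebra.coeff p).sum fun d c => c • monOp d q) y =
      (AddMonoidAlgebra.coeff p).sum (fun d c => polyTranslate (c • monOp d q) y) from
    map_finsuppSum (aeval fun i => X i + C (y i)) _ _]
  exact Finsupp.sum_congr fun d _ => by
    rw [monOp_translate]
    show _ = aeval _ _
    rw [map_smul]
    rfl

lemma constantCoeff_polyTranslate (q : MvPolynomial (Fin n) ℝ) (y : Fin n → ℝ) :
    constantCoeff (polyTranslate q y) = eval y q := by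
  induction q using MvPolynomial.induction_on with
  | C a => simp [polyTranslate]
  | add p q hp hq => simp [polyTranslate, map_add] at hp hq ⊢; rw [hp, hq]
  | mul_X p j hp =>
      simp [polyTranslate, map_mul] at hp ⊢; rw [hp]; exact Or.inl rfl

lemma eval_polyTranslate (q : MvPolynomial (Fin n) ℝ) (x y : Fin n → ℝ) :
    eval x (polyTranslate q y) = eval (x + y) q := by
  induction q using MvPolynomial.induction_on with
  | C a => simp [polyTranslate]
  | add p q hp hq => simp [polyTranslate, map_add] at hp hq ⊢; rw [hp, hq]
  | mul_X p j hp =>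
      simp [polyTranslate, map_mul] at hp ⊢; rw [hp]; exact Or.inl rfl

lemma fischer_translate (q p : MvPolynomial (Fin n) ℝ) (y : Fin n → ℝ) :
    fischer q (polyTranslate p y) = eval y (diffOp q p) := by
  rw [fischer, diffOp_translate, constantCoeff_polyTranslate]

lemma fischer_add_right (q r s : MvPolynomial (Fin n) ℝ) :
    fischer q (r + s) = fischer q r + fischer q s := by
  rw [fischer, diffOp_add_right, map_add]; rfl

lemma fischer_smul_right (q : MvPolynomial (Fin n) ℝ) (c : ℝ) (r : MvPolynomial (Fin n) ℝ) :
    fischer q (c • r) = c * fischer q r := by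
  rw [fischer, diffOp_smul_right, smul_eq_C_mul, map_mul, constantCoeff_C]; rfl

lemma fischer_sum {ι : Type*} (s : Finset ι) (q : MvPolynomial (Fin n) ℝ)
    (c : ι → ℝ) (v : ι → MvPolynomial (Fin n) ℝ) :
    fischer q (∑ i ∈ s, c i • v i) = ∑ i ∈ s, c i * fischer q (v i) := by
  classical
  induction s using Finset.induction_on with
  | empty =>
      simp [fischer, show diffOp q 0 = 0 by
        have := diffOp_smul_right q 0 0; simpa using this]
  | insert a s hx ih =>
      rw [Finset.sum_insert hx, Finset.sum_insert hx, fischer_add_right, fischer_smul_right, ih]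

end aux

/-- generalized Taylor formula. If `(p_i)_{i∈I}` is an orthonormal basis of the
span `R` of all translates of `p` for the Fischer inner product, and `p̆_i = ∂(p_i)p`, then
`p(x+y) = ∑_i p_i(x) p̆_i(y)` for all `x, y`. -/
theorem stmt_2 {n : ℕ} (p : MvPolynomial (Fin n) ℝ) {ι : Type*} [Fintype ι]
    (pfam : ι → MvPolynomial (Fin n) ℝ)
    (hmem : ∀ i, pfam i ∈ translateSpan p)
    (hspan : translateSpan p ≤ Submodule.span ℝ (Set.range pfam))
    (hortho : ∀ i j, fischer (pfam i) (pfam j) = if i = j then 1 else 0)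
    (x y : Fin n → ℝ) :
    eval (x + y) p = ∑ i, eval x (pfam i) * eval y (diffOp (pfam i) p) := by
  classical
  have hty : polyTranslate p y ∈ Submodule.span ℝ (Set.range pfam) :=
    hspan (Submodule.subset_span ⟨y, rfl⟩)
  obtain ⟨c, hc⟩ := (Submodule.mem_span_range_iff_exists_fun ℝ).mp hty
  have hcoef : ∀ i, c i = eval y (diffOp (pfam i) p) := by
    intro i
    have h1 : fischer (pfam i) (polyTranslate p y) = c i := by
      rw [← hc, fischer_sum]
      rw [Finset.sum_eq_single i (fun j _ hj => by simp [hortho i j, (Ne.symm hj : ¬ i = j)])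
        (fun h => absurd (Finset.mem_univ i) h)]
      simp [hortho i i]
    rw [← h1, fischer_translate]
  calc eval (x + y) p = eval x (polyTranslate p y) := (eval_polyTranslate p x y).symm
    _ = eval x (∑ i, c i • pfam i) := by rw [hc]
    _ = ∑ i, eval x (pfam i) * eval y (diffOp (pfam i) p) := by
        rw [map_sum]
        refine Finset.sum_congr rfl fun i _ => ?_
        rw [hcoef i]
        simp [smul_eq_mul, mul_comm]
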